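/- With notation as in the p-adic graph kernel setting (G ⊂ ℚ_p finite, K = ⊔_{I∈G}(I+p^Nℤ_p), J_N(x,y) = p^N ∑_{J,K} A_{JK} 1_{J+p^Nℤ_p}(x) 1_{K+p^Nℤ_p}(y), γ_I = ∑_K A_{IK}), the operator (Lf)(x) = ∫_K (f(y) − f(x)) J_N(x,y) dy satisfies the L²-bound ‖Lf‖_{L²(K)} ≤ 2 (∑_{J∈G} γ_J²)^{1/2} ‖f‖_{L²(K)} for all f ∈ C(K, ℂ). -/

import Mathlib

open MeasureTheory


variable {p : ℕ} [hp : Fact p.Prime]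

lemma pQ_ne_zero : (p : ℚ_[p]) ≠ 0 := Nat.cast_ne_zero.mpr hp.out.pos.ne'

lemma pR_pos : (0:ℝ) < (p:ℝ) := by exact_mod_cast hp.out.pos

lemma pR_one_lt : (1:ℝ) < (p:ℝ) := by exact_mod_cast hp.out.one_lt

lemma ball_decomp (n : ℤ) :
    Metric.closedBall (0:ℚ_[p]) ((p:ℝ)^(-n)) =
      ⋃ i ∈ Finset.range p, Metric.closedBall ((i:ℚ_[p]) * (p:ℚ_[p])^n) ((p:ℝ)^(-(n+1))) := by
  ext x
  simp only [Metric.mem_closedBall, Set.mem_iUnion, Finset.mem_range, dist_eq_norm]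
  constructor
  · intro hx
    rw [sub_zero] at hx
    have hu : ‖x * (p:ℚ_[p])^(-n)‖ ≤ 1 := by
      rw [norm_mul, Padic.norm_p_zpow, neg_neg]
      calc ‖x‖ * (p:ℝ)^n ≤ (p:ℝ)^(-n) * (p:ℝ)^n := by gcongr
        _ = 1 := by rw [← zpow_add₀ pR_pos.ne', neg_add_cancel, zpow_zero]
    set z : ℤ_[p] := ⟨_, hu⟩ with hz
    refine ⟨z.appr 1, by simpa using z.appr_lt 1, ?_⟩
    have hsp : ‖z - (z.appr 1 : ℤ_[p])‖ ≤ (p:ℝ)^(-(1:ℕ):ℤ) :=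
      (PadicInt.norm_le_pow_iff_mem_span_pow _ 1).mpr (PadicInt.appr_spec 1 z)
    have hco : ((z - (z.appr 1 : ℤ_[p]) : ℤ_[p]) : ℚ_[p]) = x * (p:ℚ_[p])^(-n) - (z.appr 1 : ℚ_[p]) := by
      push_cast [hz]
      exact PadicInt.coe_sub _ _
    have hnq : ‖x * (p:ℚ_[p])^(-n) - (z.appr 1 : ℚ_[p])‖ ≤ (p:ℝ)^(-(1:ℤ)) := by
      have h := hsp
      rw [PadicInt.norm_def, hco] at h
      simpa using h
    have key : x - (z.appr 1 : ℚ_[p]) * (p:ℚ_[p])^n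
        = (x * (p:ℚ_[p])^(-n) - (z.appr 1 : ℚ_[p])) * (p:ℚ_[p])^n := by
      rw [sub_mul, mul_assoc, ← zpow_add₀ pQ_ne_zero, neg_add_cancel, zpow_zero, mul_one]
    calc ‖x - (z.appr 1 : ℚ_[p]) * (p:ℚ_[p])^n‖
        = ‖x * (p:ℚ_[p])^(-n) - (z.appr 1 : ℚ_[p])‖ * (p:ℝ)^(-n) := by
          rw [key, norm_mul, Padic.norm_p_zpow]
      _ ≤ (p:ℝ)^(-(1:ℤ)) * (p:ℝ)^(-n) := by gcongr
      _ = (p:ℝ)^(-(n+1)) := by rw [← zpow_add₀ pR_pos.ne']; ring_nf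
  · rintro ⟨i, hi, hx⟩
    rw [sub_zero]
    have h1 : ‖x - (i:ℚ_[p]) * (p:ℚ_[p])^n‖ ≤ (p:ℝ)^(-n) :=
      hx.trans (zpow_le_zpow_right₀ pR_one_lt.le (by omega))
    have h2 : ‖(i:ℚ_[p]) * (p:ℚ_[p])^n‖ ≤ (p:ℝ)^(-n) := by
      rw [norm_mul, Padic.norm_p_zpow]
      have h3 : ‖((i:ℤ):ℚ_[p])‖ ≤ 1 := Padic.norm_int_le_one _
      push_cast at h3
      nth_rewrite 2 [show ((p:ℝ)^(-n)) = 1 * (p:ℝ)^(-n) by ring]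
      gcongr
    calc ‖x‖ = ‖(x - (i:ℚ_[p]) * (p:ℚ_[p])^n) + (i:ℚ_[p]) * (p:ℚ_[p])^n‖ := by ring_nf
      _ ≤ max ‖x - (i:ℚ_[p]) * (p:ℚ_[p])^n‖ ‖(i:ℚ_[p]) * (p:ℚ_[p])^n‖ := Padic.nonarchimedean _ _
      _ ≤ (p:ℝ)^(-n) := max_le h1 h2

lemma ball_pdisj (n : ℤ) :
    (↑(Finset.range p) : Set ℕ).Pairwise (Function.onFun Disjoint
      (fun i => Metric.closedBall ((i:ℚ_[p]) * (p:ℚ_[p])^n) ((p:ℝ)^(-(n+1))))) := by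
  intro i hi j hj hij
  simp only [Finset.coe_range, Set.mem_Iio] at hi hj
  rw [Function.onFun]
  rw [Set.disjoint_left]
  intro x hxi hxj
  rw [Metric.mem_closedBall, dist_eq_norm] at hxi hxj
  have hd : ‖(i:ℚ_[p]) * (p:ℚ_[p])^n - (j:ℚ_[p]) * (p:ℚ_[p])^n‖ ≤ (p:ℝ)^(-(n+1)) := by
    calc ‖(i:ℚ_[p]) * (p:ℚ_[p])^n - (j:ℚ_[p]) * (p:ℚ_[p])^n‖
        = ‖((i:ℚ_[p]) * (p:ℚ_[p])^n - x) + (x - (j:ℚ_[p]) * (p:ℚ_[p])^n)‖ := by ring_nf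
      _ ≤ max ‖(i:ℚ_[p]) * (p:ℚ_[p])^n - x‖ ‖x - (j:ℚ_[p]) * (p:ℚ_[p])^n‖ := Padic.nonarchimedean _ _
      _ ≤ (p:ℝ)^(-(n+1)) := max_le (by rwa [norm_sub_rev]) hxj
  have hij' : ((i:ℤ) - (j:ℤ)) ≠ 0 := by omega
  have hnd : ¬ ((p:ℤ) ∣ ((i:ℤ) - (j:ℤ))) := by
    intro hdvd
    have := Int.eq_zero_of_abs_lt_dvd hdvd (by rw [abs_sub_lt_iff]; constructor <;> omega)
    exact hij' this
  have hone : ‖(((i:ℤ) - (j:ℤ) : ℤ) : ℚ_[p])‖ = 1 := by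
    refine le_antisymm (Padic.norm_int_le_one _) ?_
    by_contra hlt
    push_neg at hlt
    exact hnd ((Padic.norm_intCast_lt_one_iff).mp hlt)
  have hd2 : ‖(i:ℚ_[p]) * (p:ℚ_[p])^n - (j:ℚ_[p]) * (p:ℚ_[p])^n‖ = (p:ℝ)^(-n) := by
    rw [← sub_mul, norm_mul, Padic.norm_p_zpow]
    have : ((i:ℚ_[p]) - (j:ℚ_[p])) = (((i:ℤ) - (j:ℤ) : ℤ) : ℚ_[p]) := by push_cast; ring
    rw [this, hone, one_mul]
  rw [hd2] at hd
  have : (p:ℝ)^(-(n+1)) < (p:ℝ)^(-n) := zpow_lt_zpow_right₀ pR_one_lt (by omega)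
  linarith

lemma ennreal_mul_cancel {a b c : ENNReal} (h0 : a ≠ 0) (hinf : a ≠ ⊤) (h : a * b = a * c) : b = c :=
  le_antisymm ((ENNReal.mul_le_mul_iff_right h0 hinf).mp h.le) ((ENNReal.mul_le_mul_iff_right h0 hinf).mp h.ge)

lemma vol_ball [MeasurableSpace ℚ_[p]] [BorelSpace ℚ_[p]] (μ : Measure ℚ_[p])
    [μ.IsAddHaarMeasure] (hμ : μ (Metric.closedBall 0 1) = 1) (n : ℤ) (c : ℚ_[p]) :
    μ (Metric.closedBall c ((p:ℝ)^(-n))) = ENNReal.ofReal ((p:ℝ)^(-n)) := by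
  have htrans : ∀ (c : ℚ_[p]) (r : ℝ), μ (Metric.closedBall c r) = μ (Metric.closedBall 0 r) := by
    intro c r
    have : Metric.closedBall c r = (fun x => (-c) + x) ⁻¹' (Metric.closedBall 0 r) := by
      ext x
      simp [Metric.mem_closedBall, dist_eq_norm, neg_add_eq_sub]
    rw [this, measure_preimage_add]
  have step : ∀ m : ℤ, μ (Metric.closedBall (0:ℚ_[p]) ((p:ℝ)^(-m)))
      = p * μ (Metric.closedBall (0:ℚ_[p]) ((p:ℝ)^(-(m+1)))) := by
    intro m
    rw [ball_decomp m, measure_biUnion_finset (ball_pdisj m) (fun i _ => measurableSet_closedBall)]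
    rw [Finset.sum_congr rfl (fun i _ => htrans _ _)]
    simp [Finset.sum_const, Finset.card_range, nsmul_eq_mul]
  have hpc : ∀ m : ℤ, (p:ENNReal) * ENNReal.ofReal ((p:ℝ)^(-(m+1)))
      = ENNReal.ofReal ((p:ℝ)^(-m)) := by
    intro m
    rw [← ENNReal.ofReal_natCast p, ← ENNReal.ofReal_mul (by positivity)]
    congr 1
    rw [← zpow_one_add₀ pR_pos.ne']
    congr 1
    ring
  have hp0 : (p:ENNReal) ≠ 0 := Nat.cast_ne_zero.mpr hp.out.pos.ne'
  have hpt : (p:ENNReal) ≠ ⊤ := ENNReal.natCast_ne_top p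
  have hup : ∀ k : ℕ, μ (Metric.closedBall (0:ℚ_[p]) ((p:ℝ)^(-(k:ℤ))))
      = ENNReal.ofReal ((p:ℝ)^(-(k:ℤ))) := by
    intro k
    induction k with
    | zero => simpa using hμ
    | succ k ih =>
      apply ennreal_mul_cancel hp0 hpt
      have hs := step (k:ℤ)
      rw [ih, show ((k:ℤ)+1) = ((k+1:ℕ):ℤ) from by push_cast; ring] at hs
      rw [← hs]
      rw [show ((k+1:ℕ):ℤ) = ((k:ℤ)+1) from by push_cast; ring]
      exact (hpc k).symm
  have hdown : ∀ k : ℕ, μ (Metric.closedBall (0:ℚ_[p]) ((p:ℝ)^(-(-(k:ℤ)))))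
      = ENNReal.ofReal ((p:ℝ)^(-(-(k:ℤ)))) := by
    intro k
    induction k with
    | zero => simpa using hμ
    | succ k ih =>
      have hs := step (-((k:ℤ)+1))
      rw [show (-((k:ℤ)+1)+1) = -(k:ℤ) by ring] at hs
      rw [ih] at hs
      rw [show (- -((k+1:ℕ):ℤ)) = -(-((k:ℤ)+1)) from by push_cast; ring, hs,
        show (- -((k:ℤ))) = -(-((k:ℤ)+1)+1) from by ring, hpc]
  rw [htrans]
  obtain ⟨k, rfl | rfl⟩ := Int.eq_nat_or_neg n
  · exact hup k
  · exact hdown k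

lemma cs_set {α : Type*} [MeasurableSpace α] (μ : Measure α) (S : Set α)
    (hfin : μ S ≠ ⊤) (g : α → ℝ) (hgn : ∀ x, 0 ≤ g x)
    (hg2 : IntegrableOn (fun x => g x ^ 2) S μ) (hgm : AEStronglyMeasurable g (μ.restrict S)) :
    ∫ x in S, g x ∂μ ≤ Real.sqrt ((μ S).toReal) * Real.sqrt (∫ x in S, g x ^ 2 ∂μ) := by
  haveI : IsFiniteMeasure (μ.restrict S) :=
    ⟨by rw [Measure.restrict_apply_univ]; exact lt_top_iff_ne_top.mpr hfin⟩
  have hpq : (2:ℝ).HolderConjugate 2 := Real.HolderConjugate.two_two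
  have h2 : (ENNReal.ofReal (2:ℝ)) = 2 := by norm_num
  have hmem : MemLp g (ENNReal.ofReal (2:ℝ)) (μ.restrict S) := by
    rw [h2]
    exact (memLp_two_iff_integrable_sq hgm).mpr hg2
  have hone : MemLp (fun _ : α => (1:ℝ)) (ENNReal.ofReal (2:ℝ)) (μ.restrict S) := by
    rw [h2]; exact memLp_const 1
  have h := integral_mul_le_Lp_mul_Lq_of_nonneg hpq (Filter.Eventually.of_forall hgn)
    (Filter.Eventually.of_forall fun _ => zero_le_one) hmem hone
  have hrw : ∀ a : α, g a ^ (2:ℝ) = g a ^ 2 := fun a => by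
    rw [show (2:ℝ) = ((2:ℕ):ℝ) from by norm_num, Real.rpow_natCast]
  simp only [mul_one, Real.one_rpow, integral_const, smul_eq_mul, hrw, Measure.real_def,
    Measure.restrict_apply_univ] at h
  rw [← Real.sqrt_eq_rpow, ← Real.sqrt_eq_rpow] at h
  calc ∫ x in S, g x ∂μ ≤ Real.sqrt (∫ x in S, g x ^ 2 ∂μ) * Real.sqrt ((μ S).toReal) := h
    _ = _ := mul_comm _ _

set_option maxHeartbeats 1000000 in
theorem stmt13 (p : ℕ) [Fact p.Prime] [MeasurableSpace ℚ_[p]] [BorelSpace ℚ_[p]]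
    (μ : Measure ℚ_[p]) [μ.IsAddHaarMeasure]
    (hμ : μ (Metric.closedBall 0 1) = 1)
    (G : Finset ℚ_[p]) (N : ℤ)
    (hdisj : (G : Set ℚ_[p]).PairwiseDisjoint
      (fun I => Metric.closedBall I ((p : ℝ)^(-N))))
    (Kset : Set ℚ_[p]) (hK : Kset = ⋃ I ∈ G, Metric.closedBall I ((p : ℝ)^(-N)))
    (A : ℚ_[p] → ℚ_[p] → ℝ) (hA : ∀ J K, 0 ≤ A J K)
    (γ : ℚ_[p] → ℝ) (hγ : ∀ I, γ I = ∑ K ∈ G, A I K)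
    (JN : ℚ_[p] → ℚ_[p] → ℝ)
    (hJN : ∀ x y, JN x y = (p : ℝ)^N * ∑ J ∈ G, ∑ K ∈ G, A J K *
      (if ‖x - J‖ ≤ (p : ℝ)^(-N) then 1 else 0) *
      (if ‖y - K‖ ≤ (p : ℝ)^(-N) then 1 else 0))
    (f : ℚ_[p] → ℂ) (hf : Continuous f)
    (Lf : ℚ_[p] → ℂ)
    (hLf : ∀ x, Lf x = ∫ y in Kset, (f y - f x) * (JN x y : ℂ) ∂μ) :
    Real.sqrt (∫ x in Kset, ‖Lf x‖^2 ∂μ) ≤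
      2 * Real.sqrt (∑ J ∈ G, γ J ^ 2) * Real.sqrt (∫ x in Kset, ‖f x‖^2 ∂μ) := by
  classical
  set r : ℝ := (p:ℝ)^(-N) with hr
  have hppos : (0:ℝ) < (p:ℝ) := pR_pos
  have hrpos : 0 < r := by positivity
  have hpNr : (p:ℝ)^N * r = 1 := by
    rw [hr, ← zpow_add₀ hppos.ne', add_neg_cancel, zpow_zero]
  have hvol : ∀ c : ℚ_[p], μ (Metric.closedBall c r) = ENNReal.ofReal r :=
    fun c => vol_ball μ hμ N c
  have hvolT : ∀ c : ℚ_[p], (μ (Metric.closedBall c r)).toReal = r := by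
    intro c; rw [hvol, ENNReal.toReal_ofReal hrpos.le]
  have hfinball : ∀ c : ℚ_[p], μ (Metric.closedBall c r) ≠ ⊤ := by
    intro c; rw [hvol]; exact ENNReal.ofReal_ne_top
  have hKmeas : MeasurableSet Kset := by
    rw [hK]
    exact G.finite_toSet.measurableSet_biUnion (fun i _ => measurableSet_closedBall)
  have hKcomp : IsCompact Kset := by
    rw [hK]
    exact G.finite_toSet.isCompact_biUnion (fun i _ => isCompact_closedBall _ _)
  have hsub : ∀ J ∈ G, Metric.closedBall J r ⊆ Kset := by
    intro J hJ
    rw [hK]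
    exact Set.subset_biUnion_of_mem (u := fun I => Metric.closedBall I r) hJ
  have hIf2 : IntegrableOn (fun x => ‖f x‖^2) Kset μ :=
    ((hf.norm.pow 2)).continuousOn.integrableOn_compact hKcomp
  set Φ := Real.sqrt (∫ x in Kset, ‖f x‖^2 ∂μ) with hΦ
  have hint2nn : 0 ≤ ∫ x in Kset, ‖f x‖^2 ∂μ :=
    setIntegral_nonneg hKmeas (fun x _ => by positivity)
  have hΦ0 : 0 ≤ Φ := Real.sqrt_nonneg _
  have hΦsq : Φ^2 = ∫ x in Kset, ‖f x‖^2 ∂μ := Real.sq_sqrt hint2nn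
  have hfb2 : ∀ b ∈ G, ∫ x in Metric.closedBall b r, ‖f x‖^2 ∂μ ≤ Φ^2 := by
    intro b hb
    rw [hΦsq]
    exact setIntegral_mono_set hIf2
      (Filter.Eventually.of_forall (fun x => by positivity))
      ((hsub b hb).eventuallyLE)
  have hfb1 : ∀ b ∈ G, ∫ x in Metric.closedBall b r, ‖f x‖ ∂μ ≤ Real.sqrt r * Φ := by
    intro b hb
    have h := cs_set μ (Metric.closedBall b r) (hfinball b) (fun x => ‖f x‖)
      (fun x => norm_nonneg _)
      (((hf.norm.pow 2)).continuousOn.integrableOn_compact (isCompact_closedBall _ _))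
      (hf.norm.aestronglyMeasurable.restrict)
    rw [hvolT] at h
    refine h.trans ?_
    gcongr
    calc Real.sqrt (∫ x in Metric.closedBall b r, ‖f x‖^2 ∂μ)
        ≤ Real.sqrt (Φ^2) := Real.sqrt_le_sqrt (hfb2 b hb)
      _ = Φ := Real.sqrt_sq hΦ0
  set s : ℝ := Real.sqrt r with hs
  have hs0 : 0 ≤ s := Real.sqrt_nonneg _
  have hss : s * s = r := Real.mul_self_sqrt hrpos.le
  set D : ℝ := (p:ℝ)^N * s with hD
  have hD0 : 0 ≤ D := by positivity
  have hDs : D * s = 1 := by rw [hD, mul_assoc, hss, hpNr]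
  have hrD : r * D^2 = 1 := by
    have h1 : r * D^2 = (D*s)*(D*s) := by rw [← hss]; ring
    rw [h1, hDs, mul_one]
  set B : ℚ_[p] → ℂ := fun K => ∫ y in Metric.closedBall K r, f y ∂μ with hB
  have hBn : ∀ K ∈ G, ‖B K‖ ≤ s * Φ := by
    intro K hK'
    calc ‖B K‖ ≤ ∫ y in Metric.closedBall K r, ‖f y‖ ∂μ := norm_integral_le_integral_norm _
      _ ≤ s * Φ := hfb1 K hK'
  set C : ℚ_[p] → ℂ := fun J => ((p:ℝ)^N : ℂ) * ∑ K ∈ G, (A J K : ℂ) * B K with hC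
  have hγ0 : ∀ J, 0 ≤ γ J := fun J => by
    rw [hγ]; exact Finset.sum_nonneg fun K _ => hA J K
  have hCn : ∀ J ∈ G, ‖C J‖ ≤ γ J * (D * Φ) := by
    intro J hJ
    calc ‖C J‖ ≤ ‖((p:ℝ)^N : ℂ)‖ * ∑ K ∈ G, ‖(A J K:ℂ) * B K‖ := by
          simp only [hC]
          rw [norm_mul]
          gcongr
          exact norm_sum_le _ _
      _ ≤ (p:ℝ)^N * ∑ K ∈ G, A J K * (s*Φ) := by
          rw [norm_zpow, Complex.norm_real, Real.norm_of_nonneg hppos.le]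
          gcongr with K hK'
          rw [norm_mul, Complex.norm_real, Real.norm_of_nonneg (hA J K)]
          gcongr
          · exact hA J K
          · exact hBn K hK'
      _ = γ J * (D*Φ) := by rw [← Finset.sum_mul, ← hγ, hD]; ring
  -- key pointwise formula
  have key : ∀ J₀ ∈ G, ∀ x ∈ Metric.closedBall J₀ r, Lf x = C J₀ - (γ J₀ : ℂ) * f x := by
    intro J₀ hJ₀ x hxx
    have hx : ‖x - J₀‖ ≤ r := by rwa [Metric.mem_closedBall, dist_eq_norm] at hxx
    have hind : ∀ J ∈ G, (if ‖x - J‖ ≤ r then (1:ℝ) else 0) = if J = J₀ then 1 else 0 := by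
      intro J hJ
      by_cases hJJ : J = J₀
      · subst hJJ; simp [hx]
      · rw [if_neg hJJ]
        by_cases hxJ : ‖x - J‖ ≤ r
        · exfalso
          have hmem1 : x ∈ Metric.closedBall J r := by
            rw [Metric.mem_closedBall, dist_eq_norm]; exact hxJ
          exact Set.disjoint_left.mp (hdisj hJ hJ₀ hJJ) hmem1 hxx
        · rw [if_neg hxJ]
    have hJNx : ∀ y, JN x y = (p:ℝ)^N * ∑ K ∈ G, A J₀ K * (if ‖y - K‖ ≤ r then 1 else 0) := by
      intro y
      rw [hJN x y]
      congr 1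
      have hin : ∀ J ∈ G, (∑ K ∈ G, A J K * (if ‖x - J‖ ≤ r then (1:ℝ) else 0) *
          (if ‖y - K‖ ≤ r then (1:ℝ) else 0))
          = if J = J₀ then (∑ K ∈ G, A J K * (if ‖y - K‖ ≤ r then (1:ℝ) else 0)) else 0 := by
        intro J hJ
        rw [Finset.sum_congr rfl (fun K _ => by rw [hind J hJ])]
        by_cases h : J = J₀
        · simp [h]
        · simp [h]
      rw [Finset.sum_congr rfl hin, Finset.sum_ite_eq' G J₀ _, if_pos hJ₀]
    have hiy : ∀ (K : ℚ_[p]) (y : ℚ_[p]),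
        ((Metric.closedBall K r).indicator (fun z => f z - f x) y)
        = (f y - f x) * (if ‖y - K‖ ≤ r then (1:ℂ) else 0) := by
      intro K y
      by_cases h : y ∈ Metric.closedBall K r
      · rw [Set.indicator_of_mem h]
        rw [Metric.mem_closedBall, dist_eq_norm] at h
        rw [if_pos h, mul_one]
      · rw [Set.indicator_of_notMem h]
        rw [Metric.mem_closedBall, dist_eq_norm] at h
        rw [if_neg h, mul_zero]
    have hinteg : ∀ y, (f y - f x) * ((JN x y : ℝ) : ℂ)
        = ∑ K ∈ G, (((p:ℝ)^N * A J₀ K : ℝ) : ℂ) *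
            ((Metric.closedBall K r).indicator (fun z => f z - f x) y) := by
      intro y
      rw [hJNx y]
      simp only [hiy]
      push_cast [apply_ite (Complex.ofReal)]
      rw [Finset.mul_sum, Finset.mul_sum]
      refine Finset.sum_congr rfl fun K _ => by ring
    rw [hLf x]
    calc ∫ y in Kset, (f y - f x) * (JN x y : ℂ) ∂μ
        = ∫ y in Kset, ∑ K ∈ G, (((p:ℝ)^N * A J₀ K:ℝ):ℂ) *
            ((Metric.closedBall K r).indicator (fun z => f z - f x) y) ∂μ := by
          simp only [hinteg]
      _ = ∑ K ∈ G, (((p:ℝ)^N * A J₀ K:ℝ):ℂ) *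
            ∫ y in Kset, (Metric.closedBall K r).indicator (fun z => f z - f x) y ∂μ := by
          rw [integral_finset_sum]
          · exact Finset.sum_congr rfl fun K _ => integral_const_mul _ _
          · intro K hK'
            apply Integrable.const_mul
            rw [integrable_indicator_iff measurableSet_closedBall, IntegrableOn,
              Measure.restrict_restrict measurableSet_closedBall,
              Set.inter_eq_self_of_subset_left (hsub K hK')]
            exact (hf.sub continuous_const).continuousOn.integrableOn_compact
              (isCompact_closedBall _ _)
      _ = ∑ K ∈ G, (((p:ℝ)^N * A J₀ K:ℝ):ℂ) * (B K - (r:ℂ) * f x) := by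
          refine Finset.sum_congr rfl fun K hK' => ?_
          congr 1
          rw [integral_indicator measurableSet_closedBall,
            Measure.restrict_restrict measurableSet_closedBall,
            Set.inter_eq_self_of_subset_left (hsub K hK')]
          rw [integral_sub (hf.continuousOn.integrableOn_compact (isCompact_closedBall _ _))
            (integrableOn_const (hfinball K))]
          rw [setIntegral_const, Measure.real_def, hvolT, hB, Complex.real_smul]
      _ = C J₀ - (γ J₀:ℂ) * f x := by
          simp only [mul_sub]
          rw [Finset.sum_sub_distrib]
          congr 1
          · simp only [hC]
            rw [Finset.mul_sum]
            refine Finset.sum_congr rfl fun K _ => ?_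
            push_cast
            ring
          · rw [hγ J₀]
            push_cast
            rw [Finset.sum_mul]
            refine Finset.sum_congr rfl fun K _ => ?_
            have h1 : ((p:ℝ)^N : ℂ) * (r:ℂ) = 1 := by
              have := congrArg (Complex.ofReal) hpNr
              push_cast at this
              exact this
            calc ((p:ℝ)^N:ℂ) * (A J₀ K:ℂ) * ((r:ℂ) * f x)
                = ((A J₀ K:ℂ) * f x) * (((p:ℝ)^N:ℂ) * (r:ℂ)) := by ring
              _ = (A J₀ K:ℂ) * f x := by rw [h1, mul_one]
  -- per-ball estimate
  have hball : ∀ J₀ ∈ G, IntegrableOn (fun x => ‖Lf x‖^2) (Metric.closedBall J₀ r) μ ∧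
      (∫ x in Metric.closedBall J₀ r, ‖Lf x‖^2 ∂μ ≤ γ J₀^2 * (4*Φ^2)) := by
    intro J₀ hJ₀
    set g : ℚ_[p] → ℂ := fun x => C J₀ - (γ J₀:ℂ) * f x with hg
    have hgc : Continuous g := continuous_const.sub (continuous_const.mul hf)
    have heq : Set.EqOn (fun x => ‖Lf x‖^2) (fun x => ‖g x‖^2) (Metric.closedBall J₀ r) :=
      fun x hx => by simp only [hg]; rw [key J₀ hJ₀ x hx]
    have hIg2 : IntegrableOn (fun x => ‖g x‖^2) (Metric.closedBall J₀ r) μ :=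
      (hgc.norm.pow 2).continuousOn.integrableOn_compact (isCompact_closedBall _ _)
    have hILf2 : IntegrableOn (fun x => ‖Lf x‖^2) (Metric.closedBall J₀ r) μ :=
      hIg2.congr_fun (fun x hx => (heq hx).symm) measurableSet_closedBall
    refine ⟨hILf2, ?_⟩
    rw [setIntegral_congr_fun measurableSet_closedBall heq]
    have hpt : ∀ x ∈ Metric.closedBall J₀ r, ‖g x‖^2 ≤ (γ J₀ * (D*Φ + ‖f x‖))^2 := by
      intro x hx
      have h2 : ‖g x‖ ≤ γ J₀ * (D*Φ + ‖f x‖) := by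
        calc ‖g x‖ ≤ ‖C J₀‖ + ‖(γ J₀:ℂ) * f x‖ := norm_sub_le _ _
          _ ≤ γ J₀*(D*Φ) + γ J₀ * ‖f x‖ := by
              have hn2 : ‖(γ J₀:ℂ) * f x‖ = γ J₀ * ‖f x‖ := by
                rw [norm_mul, Complex.norm_real, Real.norm_of_nonneg (hγ0 J₀)]
              rw [hn2]
              exact add_le_add_left (hCn J₀ hJ₀) _
          _ = γ J₀ * (D*Φ + ‖f x‖) := by ring
      exact pow_le_pow_left₀ (norm_nonneg _) h2 2
    have hImaj : IntegrableOn (fun x => (γ J₀ * (D*Φ + ‖f x‖))^2) (Metric.closedBall J₀ r) μ :=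
      ((continuous_const.mul (continuous_const.add hf.norm)).pow 2).continuousOn.integrableOn_compact
        (isCompact_closedBall _ _)
    refine (setIntegral_mono_on hIg2 hImaj measurableSet_closedBall hpt).trans ?_
    have hexp : ∀ x : ℚ_[p], (γ J₀ * (D*Φ + ‖f x‖))^2
        = γ J₀^2 * (((D*Φ)^2 + (2*(D*Φ)) * ‖f x‖) + ‖f x‖^2) := fun x => by ring
    simp only [hexp]
    have hI1 : IntegrableOn (fun _ : ℚ_[p] => (D*Φ)^2) (Metric.closedBall J₀ r) μ :=
      integrableOn_const (hfinball J₀)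
    have hI2 : IntegrableOn (fun x => (2*(D*Φ)) * ‖f x‖) (Metric.closedBall J₀ r) μ :=
      (continuous_const.mul hf.norm).continuousOn.integrableOn_compact (isCompact_closedBall _ _)
    have hI3 : IntegrableOn (fun x => ‖f x‖^2) (Metric.closedBall J₀ r) μ :=
      (hf.norm.pow 2).continuousOn.integrableOn_compact (isCompact_closedBall _ _)
    have hI12 : IntegrableOn (fun x => (D*Φ)^2 + (2*(D*Φ)) * ‖f x‖)
        (Metric.closedBall J₀ r) μ := hI1.add hI2
    rw [integral_const_mul, integral_add hI12 hI3, integral_add hI1 hI2,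
      setIntegral_const, Measure.real_def, hvolT, integral_const_mul]
    have hfb1' := hfb1 J₀ hJ₀
    have hfb2' := hfb2 J₀ hJ₀
    have hfb1nn : 0 ≤ ∫ x in Metric.closedBall J₀ r, ‖f x‖ ∂μ :=
      setIntegral_nonneg measurableSet_closedBall (fun x _ => norm_nonneg _)
    have hmain : r • (D*Φ)^2 + (2*(D*Φ)) * (∫ x in Metric.closedBall J₀ r, ‖f x‖ ∂μ)
        + (∫ x in Metric.closedBall J₀ r, ‖f x‖^2 ∂μ) ≤ 4*Φ^2 := by
      rw [smul_eq_mul]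
      have e1 : r * (D*Φ)^2 = Φ^2 := by
        have : r * (D*Φ)^2 = (r * D^2) * Φ^2 := by ring
        rw [this, hrD, one_mul]
      have e2 : (2*(D*Φ)) * (∫ x in Metric.closedBall J₀ r, ‖f x‖ ∂μ) ≤ 2*Φ^2 := by
        calc (2*(D*Φ)) * (∫ x in Metric.closedBall J₀ r, ‖f x‖ ∂μ)
            ≤ (2*(D*Φ)) * (s * Φ) := by
              have h20 : 0 ≤ 2*(D*Φ) := by positivity
              exact mul_le_mul_of_nonneg_left hfb1' h20
          _ = 2 * ((D*s) * Φ^2) := by ring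
          _ = 2*Φ^2 := by rw [hDs]; ring
      linarith
    exact mul_le_mul_of_nonneg_left hmain (sq_nonneg _)
  -- sum over balls
  have hsum : ∫ x in Kset, ‖Lf x‖^2 ∂μ = ∑ J ∈ G, ∫ x in Metric.closedBall J r, ‖Lf x‖^2 ∂μ := by
    rw [hK]
    exact integral_biUnion_finset G (fun i _ => measurableSet_closedBall) hdisj
      (fun i hi => (hball i hi).1)
  have htot : ∫ x in Kset, ‖Lf x‖^2 ∂μ ≤ (∑ J ∈ G, γ J^2) * (4*Φ^2) := by
    rw [hsum, Finset.sum_mul]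
    exact Finset.sum_le_sum fun i hi => (hball i hi).2
  have hsq : (∑ J ∈ G, γ J^2) * (4*Φ^2) = (2 * Real.sqrt (∑ J ∈ G, γ J ^ 2) * Φ)^2 := by
    have hsnn : 0 ≤ ∑ J ∈ G, γ J^2 := Finset.sum_nonneg fun J _ => sq_nonneg _
    have : (2 * Real.sqrt (∑ J ∈ G, γ J ^ 2) * Φ)^2
        = 4 * (Real.sqrt (∑ J ∈ G, γ J ^ 2))^2 * Φ^2 := by ring
    rw [this, Real.sq_sqrt hsnn]
    ring
  have h1 : Real.sqrt (∫ x in Kset, ‖Lf x‖^2 ∂μ)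
      ≤ Real.sqrt ((2 * Real.sqrt (∑ J ∈ G, γ J ^ 2) * Φ)^2) :=
    Real.sqrt_le_sqrt (by rw [← hsq]; exact htot)
  rwa [Real.sqrt_sq (mul_nonneg (mul_nonneg (by norm_num) (Real.sqrt_nonneg _)) hΦ0)] at h1
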